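/- Let n and k be natural numbers with k < n/2, and let λ be a partition of n whose largest part equals n − k. Then 2^n·n!/(2(n−k)·(2k)^k) ≤ 2^n·n!/(2^{ℓ(λ)}·z_λ) ≤ 2^{n+1}·(n−1)!, where the middle quantity equals the size of the sphere Ω_λ in the perfect matching association scheme on K_{2n}. (When k = 0 interpret (2k)^k = 1.) -/

import Mathlib

/-- `z_λ = ∏_i i^{m_i} m_i!`, where `m_i` is the number of parts of `λ` equal to `i`. -/
def zPart {n : ℕ} (l : Nat.Partition n) : ℕ :=
  l.parts.toFinset.prod (fun i => i ^ (l.parts.count i) * (l.parts.count i).factorial)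

lemma multiset_sum_eq (s : Multiset ℕ) : ∑ a ∈ s.toFinset, s.count a * a = s.sum := by
  conv_rhs => rw [← Multiset.toFinset_sum_count_nsmul_eq s]
  rw [Multiset.sum_sum]
  apply Finset.sum_congr rfl
  intro a _
  rw [Multiset.sum_nsmul, Multiset.sum_singleton, smul_eq_mul]

lemma key_bounds (n k : ℕ) (hk : 2 * k < n) (l : Nat.Partition n)
    (hmem : (n - k) ∈ l.parts) :
    n + 1 ≤ 2 ^ (Multiset.card l.parts) * zPart l ∧
      2 ^ (Multiset.card l.parts) * zPart l ≤ 2 * (n - k) * (2 * k) ^ k := by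
  set P := l.parts with hP
  set m := n - k with hm
  have hkn : k ≤ n := le_of_lt (lt_of_le_of_lt (by omega) hk)
  have hmk : m + k = n := by omega
  have hkm : k < m := by omega
  have hsum : P.sum = n := l.parts_sum
  have hpos : ∀ i ∈ P, 0 < i := fun i hi => l.parts_pos hi
  -- count of m in P is 1
  have hc1 : P.count m = 1 := by
    have h1 : 1 ≤ P.count m := Multiset.one_le_count_iff_mem.mpr hmem
    by_contra h
    have h2 : 2 ≤ P.count m := by omega
    have hle := Multiset.le_count_iff_replicate_le.mp h2
    obtain ⟨u, hu⟩ := Multiset.le_iff_exists_add.mp hle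
    have : 2 * m ≤ P.sum := by
      rw [hu]; simp [Multiset.sum_replicate, two_mul]
    omega
  set S := P.toFinset with hS
  have hmS : m ∈ S := Multiset.mem_toFinset.mpr hmem
  set T := S.erase m with hT
  set c : ℕ → ℕ := fun i => P.count i with hc
  have sumid : ∑ i ∈ S, c i * i = n := by rw [← hsum]; exact multiset_sum_eq P
  have cardid : ∑ i ∈ S, c i = Multiset.card P := Multiset.toFinset_sum_count_eq P
  have hsplit : ∀ f : ℕ → ℕ, ∑ i ∈ S, f i = f m + ∑ i ∈ T, f i := by
    intro f
    rw [hT, Finset.add_sum_erase S f hmS]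
  have sumT : ∑ i ∈ T, c i * i = k := by
    have h0 := hsplit (fun i => c i * i)
    rw [sumid] at h0
    have hcm : c m * m = m := by
      show Multiset.count m P * m = m
      rw [hc1, one_mul]
    rw [hcm] at h0
    omega
  have cardT : Multiset.card P = 1 + ∑ i ∈ T, c i := by
    have h0 := hsplit c
    rw [cardid] at h0
    have hcm : c m = 1 := hc1
    rw [hcm] at h0
    exact h0
  -- each term bounds
  have hterm : ∀ i ∈ T, c i * i ≤ k := by
    intro i hi
    rw [← sumT]
    exact Finset.single_le_sum (f := fun i => c i * i) (fun j _ => Nat.zero_le _) hi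
  have hiT : ∀ i ∈ T, 1 ≤ i ∧ 1 ≤ c i := by
    intro i hi
    have hiS : i ∈ S := Finset.mem_of_mem_erase hi
    have hiP : i ∈ P := Multiset.mem_toFinset.mp hiS
    exact ⟨hpos i hiP, Multiset.one_le_count_iff_mem.mpr hiP⟩
  have hsumTle : ∑ i ∈ T, c i ≤ k := by
    rw [← sumT]
    apply Finset.sum_le_sum
    intro i hi
    exact Nat.le_mul_of_pos_right _ (hiT i hi).1
  -- zPart decomposition
  have hz : zPart l = m * ∏ i ∈ T, (i ^ (c i) * (c i).factorial) := by
    unfold zPart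
    rw [← Finset.mul_prod_erase S _ hmS]
    simp only [← hP, ← hc, hc1, pow_one, Nat.factorial_one, mul_one, ← hS, ← hT]
    rfl
  -- power decomposition
  have hpow : 2 ^ (Multiset.card P) = 2 * ∏ i ∈ T, 2 ^ (c i) := by
    rw [cardT, pow_add, pow_one, Finset.prod_pow_eq_pow_sum]
  constructor
  · -- lower bound : n + 1 ≤ 2^card * z
    have hz1 : m ≤ zPart l := by
      rw [hz]
      have : 1 ≤ ∏ i ∈ T, (i ^ (c i) * (c i).factorial) := by
        apply Finset.one_le_prod'
        intro i hi
        have h1 := (hiT i hi).1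
        have : 0 < i ^ (c i) * (c i).factorial := by positivity
        omega
      calc m = m * 1 := (mul_one m).symm
        _ ≤ _ := Nat.mul_le_mul_left m this
    have h2 : 2 ≤ 2 ^ (Multiset.card P) := by
      rw [cardT]
      calc 2 = 2 ^ 1 := rfl
        _ ≤ _ := Nat.pow_le_pow_right (by norm_num) (by omega)
    calc n + 1 ≤ 2 * m := by omega
      _ ≤ 2 ^ (Multiset.card P) * zPart l := Nat.mul_le_mul h2 hz1
  · -- upper bound
    rw [hz, hpow]
    have : (2 * ∏ i ∈ T, 2 ^ (c i)) * (m * ∏ i ∈ T, (i ^ (c i) * (c i).factorial))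
        = 2 * m * ∏ i ∈ T, (2 ^ (c i) * (i ^ (c i) * (c i).factorial)) := by
      simp only [Finset.prod_mul_distrib]; ring
    rw [this]
    apply Nat.mul_le_mul_left
    have hstep : ∏ i ∈ T, (2 ^ (c i) * (i ^ (c i) * (c i).factorial))
        ≤ (2 * k) ^ (∑ i ∈ T, c i) := by
      rw [← Finset.prod_pow_eq_pow_sum]
      apply Finset.prod_le_prod'
      intro i hi
      have hfac : (c i).factorial ≤ (c i) ^ (c i) := Nat.factorial_le_pow _
      calc 2 ^ (c i) * (i ^ (c i) * (c i).factorial)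
          ≤ 2 ^ (c i) * (i ^ (c i) * (c i) ^ (c i)) :=
            Nat.mul_le_mul_left _ (Nat.mul_le_mul_left _ hfac)
        _ = (2 * (i * c i)) ^ (c i) := by rw [mul_pow, mul_pow]
        _ ≤ (2 * k) ^ (c i) := by
            apply Nat.pow_le_pow_left
            have h1 := hterm i hi
            rw [mul_comm i (c i)]
            omega
    refine hstep.trans ?_
    rcases Nat.eq_zero_or_pos k with hk0 | hk0
    · have h0 : ∑ i ∈ T, c i = 0 := by omega
      rw [h0, hk0]
    · exact Nat.pow_le_pow_right (by omega) hsumTle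

theorem sphere_size_bounds (n k : ℕ) (hk : 2 * k < n) (l : Nat.Partition n)
    (hmax : (n - k) ∈ l.parts ∧ ∀ p ∈ l.parts, p ≤ n - k) :
    ((2 : ℝ) ^ n * (n.factorial : ℝ)) / (2 * ((n : ℝ) - k) * (2 * (k : ℝ)) ^ k)
        ≤ ((2 : ℝ) ^ n * (n.factorial : ℝ)) /
            ((2 : ℝ) ^ (Multiset.card l.parts) * (zPart l : ℝ)) ∧
      ((2 : ℝ) ^ n * (n.factorial : ℝ)) /
            ((2 : ℝ) ^ (Multiset.card l.parts) * (zPart l : ℝ))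
        ≤ (2 : ℝ) ^ (n + 1) * ((n - 1).factorial : ℝ) := by
  obtain ⟨h1, h2⟩ := key_bounds n k hk l hmax.1
  have hkn : k ≤ n := by omega
  have hn : 0 < n := by omega
  have hA : (0:ℝ) ≤ (2 : ℝ) ^ n * (n.factorial : ℝ) := by positivity
  have hDnat : (0:ℕ) < 2 ^ (Multiset.card l.parts) * zPart l := by omega
  have hz0 : (0:ℝ) < (zPart l : ℝ) := by
    have : 0 < zPart l := Nat.pos_of_ne_zero (by intro h; simp [h] at hDnat)
    exact_mod_cast this
  have hD : (0:ℝ) < (2 : ℝ) ^ (Multiset.card l.parts) * (zPart l : ℝ) := by positivity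
  have hcast : ((2 : ℝ) ^ (Multiset.card l.parts) * (zPart l : ℝ))
      = ((2 ^ (Multiset.card l.parts) * zPart l : ℕ) : ℝ) := by push_cast; ring
  constructor
  · apply div_le_div_of_nonneg_left hA hD
    rw [hcast]
    have hcast2 : (2:ℝ) * ((n : ℝ) - k) * (2 * (k : ℝ)) ^ k
        = ((2 * (n - k) * (2 * k) ^ k : ℕ) : ℝ) := by
      push_cast [Nat.cast_sub hkn]
      ring
    rw [hcast2]
    exact_mod_cast h2
  · have hle : ((n:ℝ)) ≤ (2 : ℝ) ^ (Multiset.card l.parts) * (zPart l : ℝ) := by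
      rw [hcast]
      exact_mod_cast (by omega : n ≤ 2 ^ (Multiset.card l.parts) * zPart l)
    have hn' : (0:ℝ) < (n:ℝ) := by exact_mod_cast hn
    calc ((2 : ℝ) ^ n * (n.factorial : ℝ)) /
            ((2 : ℝ) ^ (Multiset.card l.parts) * (zPart l : ℝ))
        ≤ ((2 : ℝ) ^ n * (n.factorial : ℝ)) / (n : ℝ) :=
          div_le_div_of_nonneg_left hA hn' hle
      _ = (2 : ℝ) ^ n * ((n-1).factorial : ℝ) := by
          have : (n.factorial : ℝ) = (n : ℝ) * ((n-1).factorial : ℝ) := by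
            rw [← Nat.mul_factorial_pred hn.ne']; push_cast; ring
          rw [this]
          field_simp
      _ ≤ (2 : ℝ) ^ (n + 1) * ((n - 1).factorial : ℝ) := by
          apply mul_le_mul_of_nonneg_right _ (by positivity)
          apply pow_le_pow_right₀ (by norm_num) (by omega)
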